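/- Let G be a (k+1)-regular graph. A set S of vertices is a k-conversion set of G if and only if the induced subgraph G[V − S] is a forest (acyclic). -/

import Mathlib

open scoped Classical

noncomputable def convStep {V : Type*} [Fintype V] (G : SimpleGraph V) (k : ℕ)
    (S : Finset V) : Finset V :=
  S ∪ Finset.univ.filter fun v => k ≤ (S.filter fun u => G.Adj v u).card

def IsConversionSet {V : Type*} [Fintype V] (G : SimpleGraph V) (k : ℕ)
    (S : Finset V) : Prop :=
  ∃ t : ℕ, (convStep G k)^[t] S = Finset.univ

noncomputable def convNum {V : Type*} [Fintype V] (G : SimpleGraph V) (k : ℕ) : ℕ :=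
  sInf {n : ℕ | ∃ S : Finset V, IsConversionSet G k S ∧ S.card = n}

def IndepFinset {V : Type*} (G : SimpleGraph V) (S : Finset V) : Prop :=
  ∀ v ∈ S, ∀ w ∈ S, ¬ G.Adj v w

namespace ConvAux
open SimpleGraph

/-- Membership in one conversion step. -/
lemma mem_convStep {V : Type*} [Fintype V] {G : SimpleGraph V} {k : ℕ} {S : Finset V} {v : V} :
    v ∈ convStep G k S ↔ v ∈ S ∨ k ≤ (S.filter fun u => G.Adj v u).card := by
  rw [convStep, Finset.mem_union, Finset.mem_filter]
  constructor
  · rintro (h | ⟨-, h⟩)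
    · exact Or.inl h
    · exact Or.inr h
  · rintro (h | h)
    · exact Or.inl h
    · exact Or.inr ⟨Finset.mem_univ _, h⟩

lemma subset_convStep {V : Type*} [Fintype V] (G : SimpleGraph V) (k : ℕ) (S : Finset V) :
    S ⊆ convStep G k S := Finset.subset_union_left

/-- The start vertex of a cycle has two distinct neighbours in the cycle's support. -/
lemma start_two_nbrs {W : Type*} {H : SimpleGraph W} {x : W} {c : H.Walk x x}
    (hc : c.IsCycle) :
    ∃ z₁ z₂, z₁ ∈ c.support ∧ z₂ ∈ c.support ∧ z₁ ≠ z₂ ∧ H.Adj x z₁ ∧ H.Adj x z₂ := by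
  have hn : ¬ c.Nil := hc.not_nil
  set z₁ := c.getVert 1 with hz₁
  have h1 : H.Adj x z₁ := c.adj_snd hn
  set q := c.tail with hqdef
  have hcons : Walk.cons (c.adj_snd hn) q = c := c.cons_tail_eq hn
  have hc' : (Walk.cons (c.adj_snd hn) q).IsCycle := by rw [hcons]; exact hc
  rw [Walk.cons_isCycle_iff] at hc'
  obtain ⟨hq, he⟩ := hc'
  have hlen : q.length + 1 = c.length := c.length_tail_add_one hn
  have h3 : 3 ≤ c.length := hc.three_le_length
  have hqlen : 2 ≤ q.length := by omega
  have hqrn : ¬ q.reverse.Nil := by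
    rw [Walk.nil_iff_length_eq, Walk.length_reverse]; omega
  set z₂ := q.reverse.getVert 1 with hz₂
  have h2 : H.Adj x z₂ := q.reverse.adj_snd hqrn
  have hz₂q : z₂ ∈ q.support := by
    have : z₂ ∈ q.reverse.support := by
      rw [Walk.mem_support_iff_exists_getVert]
      exact ⟨1, rfl, by rw [Walk.length_reverse]; omega⟩
    rwa [Walk.support_reverse, List.mem_reverse] at this
  have hsupc : c.support = x :: q.support := by
    have h := Walk.support_cons (c.adj_snd hn) q
    rw [hcons] at h
    exact h
  have hz₂mem : z₂ ∈ c.support := by rw [hsupc]; exact List.mem_cons_of_mem _ hz₂q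
  have hz₁mem : z₁ ∈ c.support := by
    rw [hsupc]; exact List.mem_cons_of_mem _ q.start_mem_support
  refine ⟨z₁, z₂, hz₁mem, hz₂mem, ?_, h1, h2⟩
  intro heq
  apply he
  have hedge : s(x, z₂) ∈ q.reverse.edges := by
    have hcons2 : Walk.cons (q.reverse.adj_snd hqrn) q.reverse.tail = q.reverse :=
      q.reverse.cons_tail_eq hqrn
    rw [← hcons2, Walk.edges_cons]
    exact List.mem_cons_self
  rw [Walk.edges_reverse, List.mem_reverse] at hedge
  have hss : s(x, z₂) = s(x, c.getVert 1) := congrArg (fun w => s(x, w)) heq.symm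
  exact hss ▸ hedge

/-- Every vertex of a cycle has two distinct neighbours in the cycle's support. -/
lemma cycle_two_nbrs {W : Type*} [DecidableEq W] {H : SimpleGraph W} {x : W} {c : H.Walk x x}
    (hc : c.IsCycle) {y : W} (hy : y ∈ c.support) :
    ∃ z₁ z₂, z₁ ∈ c.support ∧ z₂ ∈ c.support ∧ z₁ ≠ z₂ ∧ H.Adj y z₁ ∧ H.Adj y z₂ := by
  obtain ⟨z₁, z₂, h₁, h₂, hne, ha₁, ha₂⟩ := start_two_nbrs (hc.rotate hy)
  have hsub : ∀ z, z ∈ (c.rotate y hy).support → z ∈ c.support := by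
    intro z hz
    rw [(c.rotate y hy).support_eq_cons] at hz
    rcases List.mem_cons.mp hz with h | h
    · rwa [h]
    · have := (Walk.support_rotate c y hy).mem_iff.mp h
      exact List.mem_of_mem_tail this
  exact ⟨z₁, z₂, hsub _ h₁, hsub _ h₂, hne, ha₁, ha₂⟩

/-- A nonempty finite acyclic graph has a vertex with at most one neighbour. -/
lemma exists_leaf {W : Type*} [Fintype W] [DecidableEq W] [Nonempty W] (H : SimpleGraph W)
    (hac : H.IsAcyclic) : ∃ v, ((Finset.univ.filter fun u => H.Adj v u)).card ≤ 1 := by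
  by_contra hcon
  push_neg at hcon
  have key : ∀ n : ℕ, ∃ (v u : W) (p : H.Walk v u), p.IsPath ∧ p.length = n := by
    intro n
    induction n with
    | zero =>
      obtain ⟨w⟩ := ‹Nonempty W›
      exact ⟨w, w, Walk.nil, Walk.IsPath.nil, rfl⟩
    | succ n ih =>
      obtain ⟨v, u, p, hp, hlen⟩ := ih
      by_cases hex : ∃ w, H.Adj v w ∧ w ∉ p.support
      · obtain ⟨w, hadj, hws⟩ := hex
        exact ⟨w, u, Walk.cons hadj.symm p,
          (Walk.cons_isPath_iff _ _).mpr ⟨hp, hws⟩, by simp [hlen]⟩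
      · exfalso
        push_neg at hex
        obtain ⟨w₁, hw₁, w₂, hw₂, hne⟩ :=
          Finset.one_lt_card.mp (hcon v)
        rw [Finset.mem_filter] at hw₁ hw₂
        have ha₁ : H.Adj v w₁ := hw₁.2
        have ha₂ : H.Adj v w₂ := hw₂.2
        have hn : ¬ p.Nil := by
          intro hnil
          have : p.support = [v] := by
            cases p with
            | nil => rfl
            | cons h q => simp at hnil
          have h1 : w₁ ∈ p.support := hex w₁ ha₁
          rw [this] at h1
          simp at h1
          exact ha₁.ne' h1
        set z := p.getVert 1 with hz
        obtain ⟨w, haw, hwz⟩ : ∃ w, H.Adj v w ∧ w ≠ z := by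
          by_cases h1 : w₁ = z
          · exact ⟨w₂, ha₂, by rw [← h1]; exact fun h => hne h.symm⟩
          · exact ⟨w₁, ha₁, h1⟩
        have hws : w ∈ p.support := hex w haw
        set r := p.takeUntil w hws with hr
        have hrp : r.IsPath := hp.takeUntil hws
        have hredge : s(w, v) ∉ r.edges := by
          intro hmem
          have hmem' : s(w, v) ∈ p.edges := Walk.edges_takeUntil_subset _ _ hmem
          have hcons : Walk.cons (p.adj_snd hn) p.tail = p := p.cons_tail_eq hn
          rw [← hcons, Walk.edges_cons, List.mem_cons] at hmem'
          rcases hmem' with h | h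
          · rw [Sym2.eq_iff] at h
            rcases h with ⟨h1, h2⟩ | ⟨h1, h2⟩
            · exact haw.ne' h1
            · exact hwz h1
          · have hv : v ∈ p.tail.support := Walk.snd_mem_support_of_mem_edges _ h
            have htail : p.tail.support = p.support.tail := p.support_tail_of_not_nil hn
            have hnodup : p.support.Nodup := hp.support_nodup
            rw [p.support_eq_cons] at hnodup
            rw [htail, p.support_eq_cons] at hv
            simp only [List.tail_cons] at hv
            exact (List.nodup_cons.mp hnodup).1 hv
        exact hac _ ((Walk.cons_isCycle_iff r haw.symm).mpr ⟨hrp, hredge⟩)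
  obtain ⟨v, u, p, hp, hlen⟩ := key (Fintype.card W)
  have h1 : p.support.length = Fintype.card W + 1 := by
    rw [Walk.length_support, hlen]
  have h2 : p.support.length ≤ Fintype.card W := hp.support_nodup.length_le_card
  omega

/-- Acyclicity is inherited by induced subgraphs on smaller vertex sets. -/
lemma acyclic_mono {V : Type*} (G : SimpleGraph V) {s t : Set V} (hst : s ⊆ t)
    (h : (G.induce t).IsAcyclic) : (G.induce s).IsAcyclic := by
  intro v c hc
  have hinj : Function.Injective ((G.induceHomOfLE hst).toHom) := fun a b hab =>
    (G.induceHomOfLE hst).injective hab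
  exact h _ (hc.map hinj)

/-- Degrees inside an induced subgraph, counted as a filter in the ambient graph. -/
lemma card_nbhd {V : Type*} [Fintype V] [DecidableEq V] (G : SimpleGraph V) (A : Finset V)
    (x : ↥((↑A : Set V))) :
    (Finset.univ.filter fun u : ↥((↑A : Set V)) => (G.induce (↑A : Set V)).Adj x u).card
      = (A.filter fun u => G.Adj ↑x u).card := by
  apply Finset.card_bij (fun (u : ↥((↑A : Set V))) _ => (u : V))
  · intro a ha
    rw [Finset.mem_filter] at ha
    rw [Finset.mem_filter]
    exact ⟨a.2, ha.2⟩
  · intro a _ b _ hab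
    exact Subtype.ext hab
  · intro b hb
    rw [Finset.mem_filter] at hb
    refine ⟨⟨b, hb.1⟩, ?_, rfl⟩
    rw [Finset.mem_filter]
    exact ⟨Finset.mem_univ _, hb.2⟩

end ConvAux

theorem stmt1 {V : Type*} [Fintype V] [DecidableEq V] (k : ℕ) (G : SimpleGraph V)
    (hreg : G.IsRegularOfDegree (k + 1)) (S : Finset V) :
    IsConversionSet G k S ↔ (G.induce ((Sᶜ : Finset V) : Set V)).IsAcyclic := by
  have hdeg : ∀ v : V, (Finset.univ.filter fun u => G.Adj v u).card = k + 1 := by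
    intro v
    rw [← SimpleGraph.neighborFinset_eq_filter]
    exact hreg v
  constructor
  · -- conversion set → acyclic
    rintro ⟨t, ht⟩
    intro x c hc
    have inv : ∀ n, ∀ y, y ∈ c.support → (y : V) ∉ (convStep G k)^[n] S := by
      intro n
      induction n with
      | zero =>
        intro y hy
        have := y.2
        rw [Finset.mem_coe, Finset.mem_compl] at this
        simpa using this
      | succ n ih =>
        intro y hy
        rw [Function.iterate_succ_apply']
        intro hmem
        rcases ConvAux.mem_convStep.mp hmem with h | h
        · exact ih y hy h
        · 
          obtain ⟨z₁, z₂, hz₁s, hz₂s, hne, ha₁, ha₂⟩ := ConvAux.cycle_two_nbrs hc hy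
          have hga₁ : G.Adj ↑y ↑z₁ := ha₁
          have hga₂ : G.Adj ↑y ↑z₂ := ha₂
          have hz₁A : (z₁ : V) ∉ (convStep G k)^[n] S := ih z₁ hz₁s
          have hz₂A : (z₂ : V) ∉ (convStep G k)^[n] S := ih z₂ hz₂s
          have hsub : ((convStep G k)^[n] S).filter (fun u => G.Adj ↑y u) ⊆
              (Finset.univ.filter fun u => G.Adj ↑y u) \ {(↑z₁ : V), ↑z₂} := by
            intro a ha
            rw [Finset.mem_filter] at ha
            rw [Finset.mem_sdiff, Finset.mem_filter]
            refine ⟨⟨Finset.mem_univ _, ha.2⟩, ?_⟩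
            intro hmem2
            rw [Finset.mem_insert, Finset.mem_singleton] at hmem2
            rcases hmem2 with rfl | rfl
            · exact hz₁A ha.1
            · exact hz₂A ha.1
          have hpair : ({(↑z₁ : V), ↑z₂} : Finset V) ⊆
              Finset.univ.filter fun u => G.Adj ↑y u := by
            intro a ha
            rw [Finset.mem_insert, Finset.mem_singleton] at ha
            rw [Finset.mem_filter]
            rcases ha with rfl | rfl
            · exact ⟨Finset.mem_univ _, hga₁⟩
            · exact ⟨Finset.mem_univ _, hga₂⟩
          have hcard2 : ({(↑z₁ : V), ↑z₂} : Finset V).card = 2 :=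
            Finset.card_pair (fun hh => hne (Subtype.ext hh))
          have hle := Finset.card_le_card hsub
          rw [Finset.card_sdiff_of_subset hpair, hdeg, hcard2] at hle
          have hk : 2 ≤ k + 1 := by
            have := Finset.card_le_card hpair
            rw [hdeg, hcard2] at this
            exact this
          omega
    have hx := inv t x c.start_mem_support
    rw [ht] at hx
    exact hx (Finset.mem_univ _)
  · -- acyclic → conversion set
    intro hac
    have step : ∀ A : Finset V, S ⊆ A → A ≠ Finset.univ → A ⊂ convStep G k A := by
      intro A hSA hAne
      have hmono : A ⊆ convStep G k A := ConvAux.subset_convStep G k A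
      rw [Finset.ssubset_iff_of_subset hmono]
      have hsubset : ((↑(Aᶜ) : Set V)) ⊆ ((↑(Sᶜ) : Set V)) := by
        intro a ha
        rw [Finset.mem_coe, Finset.mem_compl] at ha ⊢
        exact fun hs => ha (hSA hs)
      have hac' : (G.induce (↑(Aᶜ) : Set V)).IsAcyclic := ConvAux.acyclic_mono G hsubset hac
      have hne : (Aᶜ : Finset V).Nonempty := by
        by_contra hemp
        rw [Finset.not_nonempty_iff_eq_empty] at hemp
        apply hAne
        apply Finset.eq_univ_of_forall
        intro a
        by_contra haA
        have : a ∈ (Aᶜ : Finset V) := Finset.mem_compl.mpr haA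
        rw [hemp] at this
        exact absurd this (Finset.notMem_empty a)
      have hnonempty : Nonempty ↥((↑(Aᶜ) : Set V)) := by
        obtain ⟨a, ha⟩ := hne
        exact ⟨⟨a, Finset.mem_coe.mpr ha⟩⟩
      obtain ⟨x, hx⟩ := ConvAux.exists_leaf (G.induce (↑(Aᶜ) : Set V)) hac'
      replace hx : (Aᶜ.filter fun u => G.Adj ↑x u).card ≤ 1 := by
        rw [← ConvAux.card_nbhd G Aᶜ x]; convert hx
      have hvA : (↑x : V) ∉ A := by
        have := x.2
        rw [Finset.mem_coe, Finset.mem_compl] at this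
        exact this
      have hsplit : (A.filter fun u => G.Adj ↑x u).card
          + ((Aᶜ).filter fun u => G.Adj ↑x u).card = k + 1 := by
        rw [← hdeg (↑x : V)]
        rw [← Finset.card_union_of_disjoint, ← Finset.filter_union, Finset.union_compl]
        exact Finset.disjoint_filter_filter disjoint_compl_right
      have hkle : k ≤ (A.filter fun u => G.Adj ↑x u).card := by omega
      refine ⟨(↑x : V), ?_, hvA⟩
      exact ConvAux.mem_convStep.mpr (Or.inr hkle)
    have grow : ∀ n, S ⊆ (convStep G k)^[n] S := by
      intro n
      induction n with
      | zero => exact fun a ha => ha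
      | succ n ih =>
        rw [Function.iterate_succ_apply']
        exact ih.trans (ConvAux.subset_convStep G k _)
    have main : ∀ n, (convStep G k)^[n] S = Finset.univ ∨ n ≤ ((convStep G k)^[n] S).card := by
      intro n
      induction n with
      | zero => exact Or.inr (Nat.zero_le _)
      | succ n ih =>
        by_cases hu : (convStep G k)^[n] S = Finset.univ
        · left
          rw [Function.iterate_succ_apply', hu]
          exact Finset.univ_subset_iff.mp (ConvAux.subset_convStep G k _)
        · right
          rcases ih with h | h
          · exact absurd h hu
          · have hss := step _ (grow n) hu
            have hlt := Finset.card_lt_card hss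
            rw [Function.iterate_succ_apply']
            omega
    rcases main (Fintype.card V) with h | h
    · exact ⟨_, h⟩
    · refine ⟨Fintype.card V, ?_⟩
      have hle : ((convStep G k)^[Fintype.card V] S).card ≤ Fintype.card V :=
        Finset.card_le_univ _
      exact Finset.eq_univ_of_card _ (le_antisymm hle h)
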